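/- Let a ≥ 0, b and c ≥ 0, α > 0 and β ≥ 1 be reals. The function f : ℝ × ℝ → ℝ defined by f(x, y) = a x² + b x − c (y/α)^{1/β} (real power, Real.rpow) is convex on the set ℝ × { y : ℝ | 0 ≤ y }. -/

import Mathlib

/-- Convexity of the transformed EEOI constraint: the map
`(x, y) ↦ a x² + b x - c (y/α)^(1/β)` is convex on `ℝ × {y | 0 ≤ y}`. -/
theorem stmt_8 (a b c α β : ℝ) (ha : 0 ≤ a) (hc : 0 ≤ c) (hα : 0 < α) (hβ : 1 ≤ β) :
    ConvexOn ℝ ((Set.univ : Set ℝ) ×ˢ {y : ℝ | 0 ≤ y})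
      (fun p : ℝ × ℝ => a * p.1 ^ 2 + b * p.1 - c * (p.2 / α) ^ (1 / β)) := by
  have hS : Convex ℝ ((Set.univ : Set ℝ) ×ˢ {y : ℝ | 0 ≤ y}) :=
    (convex_univ).prod (convex_Ici 0)
  -- quadratic part
  have hq : ConvexOn ℝ ((Set.univ : Set ℝ) ×ˢ {y : ℝ | 0 ≤ y})
      (fun p : ℝ × ℝ => a * p.1 ^ 2 + b * p.1) := by
    have h1 : ConvexOn ℝ (Set.univ : Set ℝ) (fun x : ℝ => a * x ^ 2) :=
      (Even.convexOn_pow even_two).smul ha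
    have h2 : ConvexOn ℝ (Set.univ : Set ℝ) (fun x : ℝ => b * x) := by
      refine ⟨convex_univ, fun x _ y _ u v hu hv huv => le_of_eq ?_⟩
      simp only [smul_eq_mul]; ring
    have h3 : ConvexOn ℝ (Set.univ : Set ℝ) (fun x : ℝ => a * x ^ 2 + b * x) := h1.add h2
    exact ConvexOn.subset
      (h3.comp_affineMap ((LinearMap.fst ℝ ℝ ℝ).toAffineMap))
      (by intro p _; simp) hS
  -- rpow part
  have hβ0 : 0 ≤ 1 / β := by positivity
  have hβ1 : 1 / β ≤ 1 := by
    rw [div_le_one (lt_of_lt_of_le zero_lt_one hβ)]; exact hβ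
  have hcc : ConcaveOn ℝ (Set.Ici (0:ℝ)) (fun x : ℝ => c * x ^ (1 / β)) :=
    (Real.concaveOn_rpow hβ0 hβ1).smul hc
  have hr : ConvexOn ℝ ((Set.univ : Set ℝ) ×ˢ {y : ℝ | 0 ≤ y})
      (fun p : ℝ × ℝ => -(c * (p.2 / α) ^ (1 / β))) := by
    have h := hcc.comp_affineMap ((α⁻¹ • LinearMap.snd ℝ ℝ ℝ : ℝ × ℝ →ₗ[ℝ] ℝ).toAffineMap)
    have heq : ((fun x : ℝ => c * x ^ (1 / β)) ∘
        ((α⁻¹ • LinearMap.snd ℝ ℝ ℝ : ℝ × ℝ →ₗ[ℝ] ℝ).toAffineMap))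
        = fun p : ℝ × ℝ => c * (p.2 / α) ^ (1 / β) := by
      funext p
      simp [div_eq_inv_mul, Function.comp]
    rw [heq] at h
    have h2 := h.subset (fun p hp => ?_) hS
    · exact h2.neg
    · have hp2 : (0:ℝ) ≤ p.2 := hp.2
      simp only [Set.mem_preimage, LinearMap.coe_toAffineMap, LinearMap.smul_apply,
        LinearMap.snd_apply, smul_eq_mul, Set.mem_Ici]
      positivity
  have := hq.add hr
  simpa [sub_eq_add_neg, Pi.add_def] using this
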